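/- arXiv:1707.06837 — 2 statements merged into one kernel-verified Lean document; each statement's English description precedes it below -/
import Mathlib

section
/- With B = Jᵀ H⁻¹ Z, E = Zᵀ H⁻¹ J, and F = Jᵀ H⁻¹ J − B G⁻¹ E assumed invertible, the following identity holds: (G⁻¹ + G⁻¹ E F⁻¹ B G⁻¹) C⁻ᵀ Q⁻¹ = (I − C Q Cᵀ Zᵀ Ω⁻¹ Z + C Q Cᵀ Zᵀ Ω⁻¹ J (Jᵀ Ω⁻¹ J)⁻¹ Jᵀ Ω⁻¹ Z) C, where I is the m×m identity matrix (appendix claim 4 in the proof of Proposition 2). -/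
open Matrix

/-- Congruence by an invertible real matrix preserves positive definiteness. -/
lemma posDef_transpose_mul_mul {m : ℕ} {A : Matrix (Fin m) (Fin m) ℝ}
    (hA : A.PosDef) {B : Matrix (Fin m) (Fin m) ℝ} (hB : IsUnit B) :
    (Bᵀ * A * B).PosDef := by
  rw [Matrix.posDef_iff_dotProduct_mulVec]
  constructor
  · have hAt : Aᵀ = A := by
      simpa [Matrix.conjTranspose_eq_transpose_of_trivial] using hA.isHermitian.eq
    simp [Matrix.IsHermitian, Matrix.conjTranspose_eq_transpose_of_trivial,
      Matrix.transpose_mul, hAt, Matrix.mul_assoc]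
  · intro x hx
    have hBx : B *ᵥ x ≠ 0 := by
      have hinj := (Matrix.mulVec_injective_iff_isUnit (K := ℝ)).2 hB
      intro h
      apply hx
      apply hinj
      simpa using h
    have := hA.dotProduct_mulVec_pos hBx
    simpa [Matrix.dotProduct_mulVec, star_trivial, ← Matrix.vecMul_vecMul,
      Matrix.vecMul_transpose, Matrix.mul_assoc] using this

/-- Appendix claim 4 in the proof of Proposition 2:
(G⁻¹ + G⁻¹ E F⁻¹ B G⁻¹) C⁻ᵀ Q⁻¹
  = (I − C Q Cᵀ Zᵀ Ω⁻¹ Z + C Q Cᵀ Zᵀ Ω⁻¹ J (Jᵀ Ω⁻¹ J)⁻¹ Jᵀ Ω⁻¹ Z) C. -/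
theorem appendix_claim_4
    (n m k : ℕ)
    (H : Matrix (Fin n) (Fin n) ℝ) (Q : Matrix (Fin m) (Fin m) ℝ)
    (C : Matrix (Fin m) (Fin m) ℝ) (Z : Matrix (Fin n) (Fin m) ℝ)
    (J : Matrix (Fin n) (Fin k) ℝ)
    (hH : H.PosDef) (hQ : Q.PosDef) (hC : IsUnit C)
    (Ω : Matrix (Fin n) (Fin n) ℝ) (hΩ : Ω = H + Z * C * Q * Cᵀ * Zᵀ)
    (G : Matrix (Fin m) (Fin m) ℝ) (hG : G = Zᵀ * H⁻¹ * Z + C⁻¹ᵀ * Q⁻¹ * C⁻¹)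
    (hJ : IsUnit (Jᵀ * Ω⁻¹ * J))
    (B : Matrix (Fin k) (Fin m) ℝ) (hB : B = Jᵀ * H⁻¹ * Z)
    (E : Matrix (Fin m) (Fin k) ℝ) (hE : E = Zᵀ * H⁻¹ * J)
    (F : Matrix (Fin k) (Fin k) ℝ)
    (hF : F = Jᵀ * H⁻¹ * J - B * G⁻¹ * E)
    (hFu : IsUnit F) :
    (G⁻¹ + G⁻¹ * E * F⁻¹ * B * G⁻¹) * C⁻¹ᵀ * Q⁻¹
      = (1 - C * Q * Cᵀ * Zᵀ * Ω⁻¹ * Z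
          + C * Q * Cᵀ * Zᵀ * Ω⁻¹ * J * (Jᵀ * Ω⁻¹ * J)⁻¹ * Jᵀ * Ω⁻¹ * Z) * C := by
  -- determinant units
  have hHd : IsUnit H.det := (Matrix.isUnit_iff_isUnit_det H).1 hH.isUnit
  have hQd : IsUnit Q.det := (Matrix.isUnit_iff_isUnit_det Q).1 hQ.isUnit
  have hCd : IsUnit C.det := (Matrix.isUnit_iff_isUnit_det C).1 hC
  -- G is positive definite
  have hGpd : G.PosDef := by
    rw [hG]
    apply Matrix.PosDef.posSemidef_add
    · have := hH.inv.posSemidef.conjTranspose_mul_mul_same Z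
      simpa [Matrix.conjTranspose_eq_transpose_of_trivial] using this
    · have := posDef_transpose_mul_mul hQ.inv (Matrix.isUnit_nonsing_inv_iff.2 hC)
      simpa [Matrix.transpose_nonsing_inv] using this
  have hGd : IsUnit G.det := (Matrix.isUnit_iff_isUnit_det G).1 hGpd.isUnit
  -- cancellation simp lemmas
  have cH1 : ∀ {p : Type} (X : Matrix (Fin n) p ℝ), H⁻¹ * (H * X) = X := fun X => by
    rw [← Matrix.mul_assoc, Matrix.nonsing_inv_mul _ hHd, Matrix.one_mul]
  have cH2 : ∀ {p : Type} (X : Matrix (Fin n) p ℝ), H * (H⁻¹ * X) = X := fun X => by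
    rw [← Matrix.mul_assoc, Matrix.mul_nonsing_inv _ hHd, Matrix.one_mul]
  have cH3 : H⁻¹ * H = 1 := Matrix.nonsing_inv_mul _ hHd
  have cH4 : H * H⁻¹ = 1 := Matrix.mul_nonsing_inv _ hHd
  have cG1 : ∀ {p : Type} (X : Matrix (Fin m) p ℝ), G⁻¹ * (G * X) = X := fun X => by
    rw [← Matrix.mul_assoc, Matrix.nonsing_inv_mul _ hGd, Matrix.one_mul]
  have cG2 : ∀ {p : Type} (X : Matrix (Fin m) p ℝ), G * (G⁻¹ * X) = X := fun X => by
    rw [← Matrix.mul_assoc, Matrix.mul_nonsing_inv _ hGd, Matrix.one_mul]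
  have cG3 : G⁻¹ * G = 1 := Matrix.nonsing_inv_mul _ hGd
  have cG4 : G * G⁻¹ = 1 := Matrix.mul_nonsing_inv _ hGd
  have cC1 : ∀ {p : Type} (X : Matrix (Fin m) p ℝ), C⁻¹ * (C * X) = X := fun X => by
    rw [← Matrix.mul_assoc, Matrix.nonsing_inv_mul _ hCd, Matrix.one_mul]
  have cC2 : ∀ {p : Type} (X : Matrix (Fin m) p ℝ), C * (C⁻¹ * X) = X := fun X => by
    rw [← Matrix.mul_assoc, Matrix.mul_nonsing_inv _ hCd, Matrix.one_mul]
  have cC3 : C⁻¹ * C = 1 := Matrix.nonsing_inv_mul _ hCd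
  have cC4 : C * C⁻¹ = 1 := Matrix.mul_nonsing_inv _ hCd
  have cCt3 : C⁻¹ᵀ * Cᵀ = 1 := by
    rw [← Matrix.transpose_mul, cC4, Matrix.transpose_one]
  have cCt4 : Cᵀ * C⁻¹ᵀ = 1 := by
    rw [← Matrix.transpose_mul, cC3, Matrix.transpose_one]
  have cCt1 : ∀ {p : Type} (X : Matrix (Fin m) p ℝ), C⁻¹ᵀ * (Cᵀ * X) = X := fun X => by
    rw [← Matrix.mul_assoc, cCt3, Matrix.one_mul]
  have cCt2 : ∀ {p : Type} (X : Matrix (Fin m) p ℝ), Cᵀ * (C⁻¹ᵀ * X) = X := fun X => by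
    rw [← Matrix.mul_assoc, cCt4, Matrix.one_mul]
  have cQ1 : ∀ {p : Type} (X : Matrix (Fin m) p ℝ), Q⁻¹ * (Q * X) = X := fun X => by
    rw [← Matrix.mul_assoc, Matrix.nonsing_inv_mul _ hQd, Matrix.one_mul]
  have cQ2 : ∀ {p : Type} (X : Matrix (Fin m) p ℝ), Q * (Q⁻¹ * X) = X := fun X => by
    rw [← Matrix.mul_assoc, Matrix.mul_nonsing_inv _ hQd, Matrix.one_mul]
  have cQ3 : Q⁻¹ * Q = 1 := Matrix.nonsing_inv_mul _ hQd
  have cQ4 : Q * Q⁻¹ = 1 := Matrix.mul_nonsing_inv _ hQd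
  -- the key substitution: ZᵀH⁻¹Z = G - C⁻ᵀQ⁻¹C⁻¹
  have key : ∀ {p : Type} (X : Matrix (Fin m) p ℝ),
      Zᵀ * (H⁻¹ * (Z * X)) = G * X - C⁻¹ᵀ * (Q⁻¹ * (C⁻¹ * X)) := by
    intro p X
    rw [hG]
    simp only [Matrix.add_mul, Matrix.mul_assoc]
    abel
  have keyr : Zᵀ * (H⁻¹ * Z) = G - C⁻¹ᵀ * (Q⁻¹ * C⁻¹) := by
    have := key (1 : Matrix (Fin m) (Fin m) ℝ)
    simpa [Matrix.mul_one] using this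
  -- Woodbury identity for Ω⁻¹
  have woodbury : Ω⁻¹ = H⁻¹ - H⁻¹ * Z * G⁻¹ * Zᵀ * H⁻¹ := by
    apply Matrix.inv_eq_left_inv
    rw [hΩ]
    simp only [Matrix.sub_mul, Matrix.mul_add, Matrix.add_mul, Matrix.mul_assoc,
      cH1, cH2, cH3, cH4, cG1, cG2, cC1, cC2, cCt1, cCt2, cQ1, cQ2, key,
      Matrix.mul_sub, Matrix.sub_mul, Matrix.mul_one, Matrix.one_mul]
    abel
  -- JᵀΩ⁻¹J = F
  have hF2 : Jᵀ * Ω⁻¹ * J = F := by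
    rw [woodbury, hF, hB, hE]
    simp only [Matrix.sub_mul, Matrix.mul_sub, Matrix.mul_assoc]
  rw [hF2, woodbury, hB, hE]
  simp only [Matrix.sub_mul, Matrix.mul_sub, Matrix.add_mul, Matrix.mul_add,
    Matrix.one_mul, Matrix.mul_one, Matrix.mul_assoc,
    cH1, cH2, cH3, cH4, cG1, cG2, cG3, cG4, cC1, cC2, cC3, cC4,
    cCt1, cCt2, cCt3, cCt4, cQ1, cQ2, cQ3, cQ4, key]
  abel
end

section
/- With B = Jᵀ H⁻¹ Z, E = Zᵀ H⁻¹ J, and F = Jᵀ H⁻¹ J − B G⁻¹ E assumed invertible, the variance of the GLS estimate of the stacked coefficient vector (the lower-right block of the inverse of the block normal matrix) satisfies G⁻¹ + G⁻¹ E F⁻¹ B G⁻¹ = C Q Cᵀ − C Q Cᵀ Zᵀ Ω⁻¹ Z C Q Cᵀ + C Q Cᵀ Zᵀ Ω⁻¹ J (Jᵀ Ω⁻¹ J)⁻¹ Jᵀ Ω⁻¹ Z C Q Cᵀ; i.e., the GLS variance equals the Kalman-smoother mean squared error plus the extra term due to estimating the intercepts (Proposition 4). -/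
open Matrix

private lemma conj_posDef {m : ℕ} {A B : Matrix (Fin m) (Fin m) ℝ}
    (hA : A.PosDef) (hB : IsUnit B) : (Bᵀ * A * B).PosDef := by
  refine Matrix.PosDef.of_dotProduct_mulVec_pos ?_ (fun x hx => ?_)
  · have h := hA.isHermitian
    simp only [Matrix.IsHermitian, Matrix.conjTranspose_eq_transpose_of_trivial] at h ⊢
    rw [Matrix.transpose_mul, Matrix.transpose_mul, Matrix.transpose_transpose, h,
      Matrix.mul_assoc]
  · have hBd : IsUnit B.det := (Matrix.isUnit_iff_isUnit_det B).mp hB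
    have hx' : B *ᵥ x ≠ 0 := by
      intro hcon
      apply hx
      have h2 : B⁻¹ *ᵥ (B *ᵥ x) = B⁻¹ *ᵥ 0 := by rw [hcon]
      simpa [Matrix.mulVec_mulVec, Matrix.nonsing_inv_mul _ hBd] using h2
    have h := hA.dotProduct_mulVec_pos hx'
    have hrw : star x ⬝ᵥ ((Bᵀ * A * B) *ᵥ x) = star (B *ᵥ x) ⬝ᵥ (A *ᵥ (B *ᵥ x)) := by
      rw [← Matrix.mulVec_mulVec, ← Matrix.mulVec_mulVec, Matrix.dotProduct_mulVec,
        Matrix.vecMul_transpose]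
      simp [Matrix.dotProduct_mulVec, star]
    rw [hrw]
    exact h

/-- Proposition 4: the variance of the GLS estimate of the stacked coefficient
vector equals the Kalman-smoother mean squared error plus the extra term due
to estimating the intercepts. -/
theorem gls_variance_eq_kalman_mse_plus_intercept_term
    (n m k : ℕ)
    (H : Matrix (Fin n) (Fin n) ℝ) (Q : Matrix (Fin m) (Fin m) ℝ)
    (C : Matrix (Fin m) (Fin m) ℝ) (Z : Matrix (Fin n) (Fin m) ℝ)
    (J : Matrix (Fin n) (Fin k) ℝ)
    (hH : H.PosDef) (hQ : Q.PosDef) (hC : IsUnit C)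
    (Ω : Matrix (Fin n) (Fin n) ℝ) (hΩ : Ω = H + Z * C * Q * Cᵀ * Zᵀ)
    (G : Matrix (Fin m) (Fin m) ℝ) (hG : G = Zᵀ * H⁻¹ * Z + C⁻¹ᵀ * Q⁻¹ * C⁻¹)
    (hJ : IsUnit (Jᵀ * Ω⁻¹ * J))
    (B : Matrix (Fin k) (Fin m) ℝ) (hB : B = Jᵀ * H⁻¹ * Z)
    (E : Matrix (Fin m) (Fin k) ℝ) (hE : E = Zᵀ * H⁻¹ * J)
    (F : Matrix (Fin k) (Fin k) ℝ)
    (hF : F = Jᵀ * H⁻¹ * J - B * G⁻¹ * E)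
    (hFu : IsUnit F) :
    G⁻¹ + G⁻¹ * E * F⁻¹ * B * G⁻¹
      = C * Q * Cᵀ - C * Q * Cᵀ * Zᵀ * Ω⁻¹ * Z * C * Q * Cᵀ
        + C * Q * Cᵀ * Zᵀ * Ω⁻¹ * J * (Jᵀ * Ω⁻¹ * J)⁻¹ * Jᵀ * Ω⁻¹ * Z * C * Q * Cᵀ := by
  set P : Matrix (Fin m) (Fin m) ℝ := C * Q * Cᵀ with hPdef
  -- basic units
  have hCT : IsUnit Cᵀ := (Matrix.isUnit_iff_isUnit_det _).mpr
    (by rw [Matrix.det_transpose]; exact (Matrix.isUnit_iff_isUnit_det C).mp hC)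
  have hQu : IsUnit Q := hQ.isUnit
  have hHu : IsUnit H := hH.isUnit
  have hHd : IsUnit H.det := (Matrix.isUnit_iff_isUnit_det H).mp hHu
  have hPu : IsUnit P := (hC.mul hQu).mul hCT
  have hPd : IsUnit P.det := (Matrix.isUnit_iff_isUnit_det _).mp hPu
  have hPinv : P⁻¹ = C⁻¹ᵀ * Q⁻¹ * C⁻¹ := by
    rw [hPdef, Matrix.mul_inv_rev, Matrix.mul_inv_rev, ← Matrix.transpose_nonsing_inv,
      ← Matrix.mul_assoc]
  -- positive definiteness facts
  have hPposdef : P.PosDef := by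
    rw [hPdef]
    have h := conj_posDef hQ hCT
    simpa [Matrix.transpose_transpose] using h
  have hGpd : G.PosDef := by
    rw [hG, ← hPinv]
    refine Matrix.PosDef.posSemidef_add ?_ hPposdef.inv
    have h := hH.inv.posSemidef.conjTranspose_mul_mul_same Z
    simpa [Matrix.conjTranspose_eq_transpose_of_trivial] using h
  have hGu : IsUnit G := hGpd.isUnit
  have hGd : IsUnit G.det := (Matrix.isUnit_iff_isUnit_det G).mp hGu
  have hΩ' : Ω = H + Z * P * Zᵀ := by rw [hΩ, hPdef]; simp [Matrix.mul_assoc]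
  have hΩpd : Ω.PosDef := by
    rw [hΩ]
    refine Matrix.PosDef.add_posSemidef hH ?_
    have h := hQ.posSemidef.mul_mul_conjTranspose_same (Z * C)
    simpa [Matrix.conjTranspose_eq_transpose_of_trivial, Matrix.transpose_mul,
      Matrix.mul_assoc] using h
  have hΩu : IsUnit Ω := hΩpd.isUnit
  have hΩd : IsUnit Ω.det := (Matrix.isUnit_iff_isUnit_det Ω).mp hΩu
  have hGalt : P⁻¹ + Zᵀ * H⁻¹ * Z = G := by rw [hG, hPinv, add_comm]
  -- key identities
  have key0 : Zᵀ * H⁻¹ * Ω = G * (P * Zᵀ) := by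
    rw [hΩ', ← hGalt]
    simp only [Matrix.mul_add, Matrix.add_mul, Matrix.mul_assoc,
      Matrix.nonsing_inv_mul_cancel_left _ _ hHd,
      Matrix.nonsing_inv_mul_cancel_left _ _ hPd,
      Matrix.nonsing_inv_mul _ hHd, Matrix.mul_one]
  have key1 : G⁻¹ * (Zᵀ * H⁻¹) = P * Zᵀ * Ω⁻¹ := by
    have h := congrArg (fun X => G⁻¹ * (X * Ω⁻¹)) key0
    simpa [Matrix.mul_assoc, Matrix.mul_nonsing_inv_cancel_right _ _ hΩd,
      Matrix.nonsing_inv_mul_cancel_left _ _ hGd] using h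
  have key0' : Ω * (H⁻¹ * Z) = Z * P * G := by
    rw [hΩ', ← hGalt]
    simp only [Matrix.mul_add, Matrix.add_mul, Matrix.mul_assoc,
      Matrix.mul_nonsing_inv_cancel_left _ _ hHd,
      Matrix.mul_nonsing_inv_cancel_left _ _ hPd,
      Matrix.nonsing_inv_mul _ hHd, Matrix.mul_nonsing_inv _ hPd, Matrix.mul_one]
  have key2 : H⁻¹ * Z * G⁻¹ = Ω⁻¹ * (Z * P) := by
    have h := congrArg (fun X => Ω⁻¹ * (X * G⁻¹)) key0'
    simpa [Matrix.mul_assoc, Matrix.mul_nonsing_inv_cancel_right _ _ hGd,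
      Matrix.nonsing_inv_mul_cancel_left _ _ hΩd] using h
  -- F equals Jᵀ Ω⁻¹ J
  have key3 : F = Jᵀ * Ω⁻¹ * J := by
    have hZPZ : Z * P * Zᵀ = Ω - H := by rw [hΩ']; simp [Matrix.mul_assoc]
    have h2 : Jᵀ * H⁻¹ * Z * G⁻¹ * (Zᵀ * H⁻¹ * J)
        = Jᵀ * H⁻¹ * J - Jᵀ * Ω⁻¹ * J := by
      calc Jᵀ * H⁻¹ * Z * G⁻¹ * (Zᵀ * H⁻¹ * J)
          = Jᵀ * H⁻¹ * Z * (G⁻¹ * (Zᵀ * H⁻¹)) * J := by simp [Matrix.mul_assoc]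
        _ = Jᵀ * H⁻¹ * Z * (P * Zᵀ * Ω⁻¹) * J := by rw [key1]
        _ = Jᵀ * H⁻¹ * (Z * P * Zᵀ) * (Ω⁻¹ * J) := by simp [Matrix.mul_assoc]
        _ = Jᵀ * H⁻¹ * (Ω - H) * (Ω⁻¹ * J) := by rw [hZPZ]
        _ = Jᵀ * H⁻¹ * J - Jᵀ * Ω⁻¹ * J := by
            simp only [Matrix.mul_sub, Matrix.sub_mul, Matrix.mul_assoc,
              Matrix.mul_nonsing_inv_cancel_left _ _ hΩd,
              Matrix.nonsing_inv_mul_cancel_left _ _ hHd]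
    rw [hF, hB, hE, h2]
    abel
  -- Woodbury for G⁻¹
  have w2 : G⁻¹ = P - P * Zᵀ * Ω⁻¹ * Z * P := by
    have hAC : IsUnit (H⁻¹⁻¹ + Z * P⁻¹⁻¹ * Zᵀ) := by
      rw [Matrix.nonsing_inv_nonsing_inv _ hHd, Matrix.nonsing_inv_nonsing_inv _ hPd, ← hΩ']
      exact hΩu
    have h := Matrix.add_mul_mul_inv_eq_sub (P⁻¹) Zᵀ H⁻¹ Z
      ((Matrix.isUnit_nonsing_inv_iff).mpr hPu) ((Matrix.isUnit_nonsing_inv_iff).mpr hHu) hAC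
    rw [hGalt, Matrix.nonsing_inv_nonsing_inv _ hPd, Matrix.nonsing_inv_nonsing_inv _ hHd,
      ← hΩ'] at h
    exact h
  -- the second term
  have main2 : G⁻¹ * (Zᵀ * H⁻¹ * J) * (Jᵀ * Ω⁻¹ * J)⁻¹ * (Jᵀ * H⁻¹ * Z) * G⁻¹
      = P * Zᵀ * Ω⁻¹ * J * (Jᵀ * Ω⁻¹ * J)⁻¹ * Jᵀ * Ω⁻¹ * (Z * P) := by
    calc G⁻¹ * (Zᵀ * H⁻¹ * J) * (Jᵀ * Ω⁻¹ * J)⁻¹ * (Jᵀ * H⁻¹ * Z) * G⁻¹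
        = G⁻¹ * (Zᵀ * H⁻¹) * J * (Jᵀ * Ω⁻¹ * J)⁻¹ * Jᵀ * (H⁻¹ * Z * G⁻¹) := by
          simp [Matrix.mul_assoc]
      _ = P * Zᵀ * Ω⁻¹ * J * (Jᵀ * Ω⁻¹ * J)⁻¹ * Jᵀ * (Ω⁻¹ * (Z * P)) := by
          rw [key1, key2]
      _ = _ := by simp [Matrix.mul_assoc]
  calc G⁻¹ + G⁻¹ * E * F⁻¹ * B * G⁻¹
      = G⁻¹ + G⁻¹ * (Zᵀ * H⁻¹ * J) * (Jᵀ * Ω⁻¹ * J)⁻¹ * (Jᵀ * H⁻¹ * Z) * G⁻¹ := by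
        rw [hE, hB, key3]
    _ = P - P * Zᵀ * Ω⁻¹ * Z * P
        + P * Zᵀ * Ω⁻¹ * J * (Jᵀ * Ω⁻¹ * J)⁻¹ * Jᵀ * Ω⁻¹ * (Z * P) := by
        rw [main2, w2]
    _ = _ := by rw [hPdef]; simp [Matrix.mul_assoc]
end
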